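/- arXiv:1810.12072 — 3 statements merged into one kernel-verified Lean document; each statement's English description precedes it below -/
import Mathlib

section
/- For every real z, the Wright function with parameters γ = −1/2, δ = 1/2 (the Mainardi function of order 1/2) satisfies W(−z; −1/2, 1/2) = (1/√π) exp(−z²/4), i.e. ∑_{k=0}^∞ (−z)^k / (k! Γ(−k/2 + 1/2)) = (1/√π) e^{−z²/4}. -/
open Real

/-- The two-parameter Wright function `W(z; γ, δ) = ∑ₖ zᵏ / (k! Γ(γk + δ))`,
where `1/Γ` is the entire reciprocal gamma function (Mathlib's `Real.Gamma`
vanishes at nonpositive integers, so division by it realizes this convention). -/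
noncomputable def wright (γ δ z : ℝ) : ℝ :=
  ∑' k : ℕ, z ^ k / ((k.factorial : ℝ) * Real.Gamma (γ * k + δ))

lemma gamma_half_sub (m : ℕ) :
    Real.Gamma (1/2 - m) = (-4)^m * m.factorial * Real.sqrt π / (2*m).factorial := by
  induction m with
  | zero => norm_num [Real.Gamma_one_half_eq]
  | succ m ih =>
    have hx : (1/2 - (m+1 : ℕ) : ℝ) ≠ 0 := by
      push_cast; intro h; nlinarith
    have h1 : Real.Gamma ((1/2 - (m+1 : ℕ)) + 1) = (1/2 - (m+1 : ℕ)) * Real.Gamma (1/2 - (m+1 : ℕ)) :=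
      Real.Gamma_add_one hx
    have h2 : ((1/2 - (m+1 : ℕ)) + 1 : ℝ) = 1/2 - m := by push_cast; ring
    rw [h2, ih] at h1
    have h3 : Real.Gamma (1/2 - (m+1 : ℕ)) =
        ((-4)^m * m.factorial * Real.sqrt π / (2*m).factorial) / (1/2 - (m+1 : ℕ)) :=
      (eq_div_iff hx).mpr (by rw [mul_comm]; exact h1.symm)
    have hf1 : ((2*(m+1)).factorial : ℝ) = (2*(m:ℝ)+2) * ((2*(m:ℝ)+1) * (2*m).factorial) := by
      have : 2*(m+1) = (2*m+1) + 1 := by ring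
      rw [this, Nat.factorial_succ, Nat.factorial_succ]; push_cast; ring
    have hf2 : (((m+1)).factorial : ℝ) = ((m:ℝ)+1) * m.factorial := by
      rw [Nat.factorial_succ]; push_cast; ring
    have h2m : ((2*m).factorial : ℝ) ≠ 0 := Nat.cast_ne_zero.mpr (Nat.factorial_ne_zero _)
    rw [h3, hf1, hf2]
    have hden1 : ((2*m).factorial : ℝ) * (1/2 - ((m+1 : ℕ) : ℝ)) ≠ 0 := mul_ne_zero h2m hx
    have hden2 : (2*(m:ℝ)+2) * ((2*(m:ℝ)+1) * (2*m).factorial) ≠ 0 := by positivity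
    rw [div_div, div_eq_div_iff hden1 hden2]
    push_cast
    ring

/-- For every real `z`, `W(−z; −1/2, 1/2) = (1/√π) exp(−z²/4)`. -/
theorem wright_neg_half_half (z : ℝ) :
    wright (-(1/2)) (1/2) (-z) = (1 / Real.sqrt π) * Real.exp (-z ^ 2 / 4) := by
  unfold wright
  set f : ℕ → ℝ := fun k => (-z) ^ k / ((k.factorial : ℝ) * Real.Gamma (-(1/2) * k + 1/2)) with hf
  have hodd : ∀ m : ℕ, f (2*m+1) = 0 := by
    intro m
    have h0 : (-(1/2) * ((2*m+1 : ℕ) : ℝ) + 1/2) = -(m : ℝ) := by push_cast; ring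
    show (-z) ^ (2*m+1) / (((2*m+1).factorial : ℝ) * Real.Gamma (-(1/2) * ((2*m+1 : ℕ) : ℝ) + 1/2)) = 0
    rw [h0, Real.Gamma_neg_nat_eq_zero, mul_zero, div_zero]
  have hsupp : Function.support f ⊆ Set.range (fun m : ℕ => 2*m) := by
    intro k hk
    rcases Nat.even_or_odd k with ⟨m, hm⟩ | ⟨m, hm⟩
    · exact ⟨m, by simp; omega⟩
    · exact absurd (by rw [hm]; exact hodd m) hk
  have hinj : Function.Injective (fun m : ℕ => 2*m) := fun a b h => by
    simp only at h; omega
  have key : ∑' k, f k = ∑' m, f (2*m) := (hinj.tsum_eq hsupp).symm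
  rw [key]
  have heval : ∀ m : ℕ, f (2*m) = (1 / Real.sqrt π) * ((-z^2/4)^m / m.factorial) := by
    intro m
    have hg : (-(1/2) * ((2*m : ℕ) : ℝ) + 1/2) = 1/2 - m := by push_cast; ring
    show (-z) ^ (2*m) / (((2*m).factorial : ℝ) * Real.Gamma (-(1/2) * ((2*m : ℕ) : ℝ) + 1/2)) = _
    rw [hg, gamma_half_sub]
    have hz : (-z) ^ (2*m) = (z^2)^m := by rw [pow_mul]; ring_nf
    rw [hz]
    have h2m : ((2*m).factorial : ℝ) ≠ 0 := Nat.cast_ne_zero.mpr (Nat.factorial_ne_zero _)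
    have hm : ((m).factorial : ℝ) ≠ 0 := Nat.cast_ne_zero.mpr (Nat.factorial_ne_zero _)
    have hpi : Real.sqrt π ≠ 0 := by positivity
    have key2 : ((-z^2 : ℝ))^m * ((-4 : ℝ))^m = (z^2)^m * 4^m := by
      rw [← mul_pow, ← mul_pow]; norm_num
    have hrw : ((-z^2/4 : ℝ))^m = (-z^2)^m / 4^m := div_pow _ _ m
    rw [hrw]
    have h4 : ((4 : ℝ))^m ≠ 0 := by positivity
    have hneg4 : ((-4 : ℝ))^m ≠ 0 := pow_ne_zero _ (by norm_num)
    have key3 : ((-4 : ℝ))^m * (-1 : ℝ)^m = 4^m := by rw [← mul_pow]; norm_num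
    field_simp
    linear_combination (-(z^(m*2))) * key3
  rw [tsum_congr heval, tsum_mul_left]
  congr 1
  rw [Real.exp_eq_exp_ℝ, NormedSpace.exp_eq_tsum_div]
end

section
/- Let 0 < α < 1. Then lim_{y → +∞} W(−y; −α/2, 1) = 0, where W(−y; −α/2, 1) = ∑_{k=0}^∞ (−y)^k / (k! Γ(−αk/2 + 1)). (This is the decay of the similarity profile at infinity, which yields the far-field boundary condition u₂(x, τ) → (U_∞ − U_s)/(U_0 − U_s) as x → ∞ for the exact solution of the two-phase fractional Stefan problem.) -/
open Real Filter
open MeasureTheory Set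


lemma gamma_one_sub_inv (x : ℝ) (hx : 0 < x) :
    (Real.Gamma (1 - x))⁻¹ = Real.sin (π * x) * Real.Gamma x / π := by
  by_cases h : ∃ m : ℕ, 1 - x = -(m : ℝ)
  · obtain ⟨m, hm⟩ := h
    have hxm : x = (m : ℝ) + 1 := by linarith
    have h1 : Real.Gamma (1 - x) = 0 := by
      rw [hm]; exact Real.Gamma_neg_nat_eq_zero m
    have h2 : Real.sin (π * x) = 0 := by
      rw [hxm]
      have : π * ((m : ℝ) + 1) = ((m+1 : ℕ) : ℝ) * π := by push_cast; ring
      rw [this, Real.sin_nat_mul_pi]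
    rw [h1, h2, inv_zero, zero_mul, zero_div]
  · push_neg at h
    have hG : Real.Gamma (1 - x) ≠ 0 := Real.Gamma_ne_zero h
    have hrefl := Real.Gamma_mul_Gamma_one_sub x
    have hsin : Real.sin (π * x) ≠ 0 := by
      intro hs
      rw [hs, div_zero] at hrefl
      rcases mul_eq_zero.mp hrefl with h1 | h2
      · exact Real.Gamma_ne_zero (fun m => by have := Nat.cast_nonneg (α := ℝ) m; intro hh; rw [hh] at hx; linarith) h1
      · exact hG h2
    field_simp
    rw [mul_comm] at hrefl
    field_simp at hrefl
    have hs' : Real.sin (x * π) ≠ 0 := by rwa [mul_comm]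
    rw [eq_div_iff hs'] at hrefl
    linarith [hrefl]

lemma hasDerivAt_exp_neg_mul (c u : ℝ) :
    HasDerivAt (fun u : ℝ => Real.exp (-(c*u))) (-c * Real.exp (-(c*u))) u := by
  have hlin : HasDerivAt (fun u : ℝ => -(c*u)) (-c) u := by
    simpa [Pi.neg_def] using ((hasDerivAt_id u).const_mul c).neg
  simpa [mul_comm, Function.comp_def] using (Real.hasDerivAt_exp (-(c*u))).comp u hlin

lemma exp_cos_integrableOn (c b : ℝ) (hc : 0 < c) :
    IntegrableOn (fun u => Real.exp (-(c*u)) * Real.cos (b*u)) (Ioi 0) := by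
  have h0 : IntegrableOn (fun u : ℝ => Real.exp (-(c*u))) (Ioi 0) := by
    simpa [neg_mul] using exp_neg_integrableOn_Ioi 0 hc
  refine h0.mono' ?_ ?_
  · exact (((Real.continuous_exp.comp (continuous_const.mul continuous_id).neg)).mul
      (Real.continuous_cos.comp (continuous_const.mul continuous_id))).aestronglyMeasurable
  · filter_upwards with u
    rw [Real.norm_eq_abs, abs_mul, abs_exp]
    calc Real.exp (-(c*u)) * |Real.cos (b*u)| ≤ Real.exp (-(c*u)) * 1 :=
          mul_le_mul_of_nonneg_left (Real.abs_cos_le_one _) (Real.exp_nonneg _)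
      _ = Real.exp (-(c*u)) := mul_one _

lemma integral_exp_cos (c b : ℝ) (hc : 0 < c) :
    ∫ u in Ioi 0, Real.exp (-(c*u)) * Real.cos (b*u) = c / (c^2 + b^2) := by
  have hcb : (0:ℝ) < c^2 + b^2 := by positivity
  set F : ℝ → ℝ := fun u => Real.exp (-(c*u)) * (b * Real.sin (b*u) - c * Real.cos (b*u)) / (c^2+b^2) with hF
  have hderiv : ∀ u : ℝ, HasDerivAt F (Real.exp (-(c*u)) * Real.cos (b*u)) u := by
    intro u
    have h1 := hasDerivAt_exp_neg_mul c u
    have hlin : HasDerivAt (fun u : ℝ => b*u) b u := by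
      simpa using (hasDerivAt_id u).const_mul b
    have hs : HasDerivAt (fun u : ℝ => Real.sin (b*u)) (Real.cos (b*u) * b) u :=
      (Real.hasDerivAt_sin (b*u)).comp u hlin
    have hcs : HasDerivAt (fun u : ℝ => Real.cos (b*u)) (-Real.sin (b*u) * b) u :=
      (Real.hasDerivAt_cos (b*u)).comp u hlin
    have h2 : HasDerivAt (fun u : ℝ => b * Real.sin (b*u) - c * Real.cos (b*u))
        (b * (Real.cos (b*u) * b) - c * (-Real.sin (b*u) * b)) u :=
      (hs.const_mul b).sub (hcs.const_mul c)
    have := (h1.mul h2).div_const (c^2+b^2)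
    refine this.congr_deriv ?_
    field_simp
    ring
  have htend : Tendsto F atTop (nhds 0) := by
    have hb : Tendsto (fun u : ℝ => Real.exp (-(c*u))) atTop (nhds 0) := by
      exact Real.tendsto_exp_neg_atTop_nhds_zero.comp (tendsto_id.const_mul_atTop hc)
    apply squeeze_zero_norm (a := fun u => Real.exp (-(c*u)) * ((|b| + |c|)/(c^2+b^2)))
    · intro u
      rw [hF]
      rw [Real.norm_eq_abs, abs_div, abs_mul, abs_exp, abs_of_pos hcb, div_le_iff₀ hcb]
      have hbd : |b * Real.sin (b*u) - c * Real.cos (b*u)| ≤ |b| + |c| := by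
        calc |b * Real.sin (b*u) - c * Real.cos (b*u)| ≤ |b * Real.sin (b*u)| + |c * Real.cos (b*u)| := abs_sub _ _
          _ ≤ |b| * 1 + |c| * 1 := by
              rw [abs_mul, abs_mul]
              gcongr
              exacts [Real.abs_sin_le_one _, Real.abs_cos_le_one _]
          _ = |b| + |c| := by ring
      calc Real.exp (-(c*u)) * |b * Real.sin (b*u) - c * Real.cos (b*u)|
          ≤ Real.exp (-(c*u)) * (|b| + |c|) := mul_le_mul_of_nonneg_left hbd (Real.exp_nonneg _)
        _ = Real.exp (-(c*u)) * ((|b| + |c|)/(c^2+b^2)) * (c^2+b^2) := by field_simp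
    · simpa using hb.mul_const ((|b| + |c|)/(c^2+b^2))
  have := integral_Ioi_of_hasDerivAt_of_tendsto
    (f := F) (f' := fun u => Real.exp (-(c*u)) * Real.cos (b*u)) (a := 0)
    (hderiv 0).continuousAt.continuousWithinAt
    (fun x _ => hderiv x) (exp_cos_integrableOn c b hc) htend
  rw [this, hF]
  simp
  ring

lemma abs_sin_mul_div_le (x a : ℝ) (ha : 0 < a) : |Real.sin (x*a) / a| ≤ |x| := by
  rw [abs_div, abs_of_pos ha, div_le_iff₀ ha]
  calc |Real.sin (x*a)| ≤ |x*a| := Real.abs_sin_le_abs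
    _ = |x| * a := by rw [abs_mul, abs_of_pos ha]

lemma exp_sin_div_integrableOn (c x : ℝ) (hc : 0 < c) :
    IntegrableOn (fun u => Real.exp (-(c*u)) * Real.sin (x*u) / u) (Ioi 0) := by
  have h0 : IntegrableOn (fun u : ℝ => Real.exp (-(c*u)) * |x|) (Ioi 0) := by
    simpa [neg_mul, IntegrableOn] using (exp_neg_integrableOn_Ioi 0 hc).mul_const |x|
  refine h0.mono' ?_ ?_
  · apply ContinuousOn.aestronglyMeasurable ?_ measurableSet_Ioi
    apply ContinuousOn.div
    · exact (((Real.continuous_exp.comp (continuous_const.mul continuous_id).neg)).mul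
        (Real.continuous_sin.comp (continuous_const.mul continuous_id))).continuousOn
    · exact continuous_id.continuousOn
    · exact fun u hu => ne_of_gt hu
  · filter_upwards [ae_restrict_mem measurableSet_Ioi] with u hu
    rw [Real.norm_eq_abs, mul_div_assoc, abs_mul, abs_exp]
    exact mul_le_mul_of_nonneg_left (abs_sin_mul_div_le x u hu) (Real.exp_nonneg _)

lemma integral_exp_sin_div (c b : ℝ) (hc : 0 < c) :
    ∫ u in Ioi 0, Real.exp (-(c*u)) * Real.sin (b*u) / u = Real.arctan (b/c) := by
  set φ : ℝ → ℝ := fun x => ∫ u in Ioi 0, Real.exp (-(c*u)) * Real.sin (x*u) / u with hφ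
  have hφderiv : ∀ x : ℝ, HasDerivAt φ (c / (c^2 + x^2)) x := by
    intro x
    have key := hasDerivAt_integral_of_dominated_loc_of_deriv_le (μ := volume.restrict (Ioi 0))
      (F := fun x u => Real.exp (-(c*u)) * Real.sin (x*u) / u)
      (F' := fun x u => Real.exp (-(c*u)) * Real.cos (x*u))
      (x₀ := x) (bound := fun u => Real.exp (-(c*u))) (s := Metric.ball x 1) (Metric.ball_mem_nhds x one_pos)
      ?_ ((exp_sin_div_integrableOn c x hc)) ?_ ?_ ?_ ?_
    · have h2 := key.2
      rwa [integral_exp_cos c x hc] at h2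
    · filter_upwards with y
      exact ((exp_sin_div_integrableOn c y hc)).aestronglyMeasurable
    · exact (exp_cos_integrableOn c x hc).aestronglyMeasurable
    · filter_upwards [ae_restrict_mem measurableSet_Ioi] with u hu
      intro y _
      rw [Real.norm_eq_abs, abs_mul, abs_exp]
      calc Real.exp (-(c*u)) * |Real.cos (y*u)| ≤ Real.exp (-(c*u)) * 1 :=
            mul_le_mul_of_nonneg_left (Real.abs_cos_le_one _) (Real.exp_nonneg _)
        _ = Real.exp (-(c*u)) := mul_one _
    · simpa [neg_mul, IntegrableOn] using exp_neg_integrableOn_Ioi 0 hc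
    · filter_upwards [ae_restrict_mem measurableSet_Ioi] with u hu
      intro y _
      have hu0 : u ≠ 0 := ne_of_gt hu
      have hlin : HasDerivAt (fun y : ℝ => y*u) u y := by
        simpa using (hasDerivAt_id y).mul_const u
      have hs : HasDerivAt (fun y : ℝ => Real.sin (y*u)) (Real.cos (y*u) * u) y :=
        by simpa [Function.comp_def] using (Real.hasDerivAt_sin (y*u)).comp y hlin
      have := (hs.const_mul (Real.exp (-(c*u)))).div_const u
      refine this.congr_deriv ?_
      rw [mul_div_assoc, mul_div_cancel_right₀ _ hu0]
  set ψ : ℝ → ℝ := fun x => Real.arctan (x/c) with hψ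
  have hψderiv : ∀ x : ℝ, HasDerivAt ψ (c / (c^2 + x^2)) x := by
    intro x
    have h1 : HasDerivAt (fun x : ℝ => x/c) (1/c) x := by
      simpa [one_div] using (hasDerivAt_id x).div_const c
    have := (Real.hasDerivAt_arctan (x/c)).comp x h1
    refine this.congr_deriv ?_
    rw [div_pow]
    field_simp
  have hdiff : ∀ x : ℝ, HasDerivAt (fun x => φ x - ψ x) 0 x := by
    intro x
    simpa [Pi.sub_def] using (hφderiv x).sub (hψderiv x)
  have hconst : φ b - ψ b = φ 0 - ψ 0 := by
    have hd : Differentiable ℝ (fun x => φ x - ψ x) := fun x => (hdiff x).differentiableAt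
    have h0 : ∀ x, deriv (fun x => φ x - ψ x) x = 0 := fun x => (hdiff x).deriv
    exact is_const_of_deriv_eq_zero hd h0 b 0
  have hφ0 : φ 0 = 0 := by
    rw [hφ]
    simp
  have hψ0 : ψ 0 = 0 := by
    rw [hψ]
    simp
  have : φ b = ψ b := by linarith
  rw [hφ, hψ] at this
  exact this

lemma gamma_add_le (x ν : ℝ) (hx : 1 ≤ x) (hν0 : 0 ≤ ν) (hν1 : ν ≤ 1) :
    Real.Gamma (x + ν) ≤ Real.Gamma x * x ^ ν := by
  have hx0 : (0:ℝ) < x := lt_of_lt_of_le one_pos hx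
  have hΓx : 0 < Real.Gamma x := Real.Gamma_pos_of_pos hx0
  have hΓxν : 0 < Real.Gamma (x + ν) := Real.Gamma_pos_of_pos (by linarith)
  have hmem1 : x ∈ Ioi (0:ℝ) := hx0
  have hmem2 : x + 1 ∈ Ioi (0:ℝ) := by simp; linarith
  have hcvx := Real.convexOn_log_Gamma.2 hmem1 hmem2 (by linarith : (0:ℝ) ≤ 1 - ν) hν0 (by ring)
  have heq : (1 - ν) • x + ν • (x + 1) = x + ν := by simp [smul_eq_mul]; ring
  rw [heq] at hcvx
  simp only [Function.comp_apply, smul_eq_mul] at hcvx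
  have hΓ1 : Real.Gamma (x + 1) = x * Real.Gamma x := Real.Gamma_add_one (ne_of_gt hx0)
  rw [hΓ1, Real.log_mul (ne_of_gt hx0) (ne_of_gt hΓx)] at hcvx
  have hle : Real.log (Real.Gamma (x + ν)) ≤ Real.log (Real.Gamma x) + ν * Real.log x := by
    nlinarith
  calc Real.Gamma (x + ν) = Real.exp (Real.log (Real.Gamma (x + ν))) :=
        (Real.exp_log hΓxν).symm
    _ ≤ Real.exp (Real.log (Real.Gamma x) + ν * Real.log x) := Real.exp_le_exp.2 hle
    _ = Real.Gamma x * x ^ ν := by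
        rw [Real.exp_add, Real.exp_log hΓx, Real.rpow_def_of_pos hx0, mul_comm ν]

lemma summable_gamma_aux (ν y : ℝ) (hν0 : 0 < ν) (hν1 : ν < 1) (hy : 0 ≤ y) :
    Summable (fun k : ℕ => y ^ (k+1) * Real.Gamma (ν * ((k:ℝ)+1)) / (Nat.factorial (k+1) : ℝ)) := by
  apply summable_of_ratio_norm_eventually_le (r := 1/2) (by norm_num)
  have ev1 : ∀ᶠ k : ℕ in atTop, 1 ≤ ν * ((k:ℝ)+1) := by
    have ht : Tendsto (fun k : ℕ => ν * ((k:ℝ)+1)) atTop atTop := by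
      apply Tendsto.const_mul_atTop hν0
      exact tendsto_atTop_add_const_right _ _ tendsto_natCast_atTop_atTop
    exact ht.eventually_ge_atTop 1
  have ev2 : ∀ᶠ k : ℕ in atTop, y * ((k:ℝ)+1) ^ (ν-1) < 1/2 := by
    have ht : Tendsto (fun k : ℕ => y * ((k:ℝ)+1) ^ (ν-1)) atTop (nhds 0) := by
      have h1 : Tendsto (fun x : ℝ => x ^ (ν-1)) atTop (nhds 0) := by
        have := tendsto_rpow_neg_atTop (by linarith : (0:ℝ) < 1 - ν)
        simpa [neg_sub] using this
      have h2 : Tendsto (fun k : ℕ => ((k:ℝ)+1)) atTop atTop :=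
        tendsto_atTop_add_const_right _ _ tendsto_natCast_atTop_atTop
      simpa using (h1.comp h2).const_mul y
    exact ht.eventually_lt_const (by norm_num)
  filter_upwards [ev1, ev2] with k h1 h2
  have hG : 0 < Real.Gamma (ν*((k:ℝ)+1)) := Real.Gamma_pos_of_pos (by positivity)
  have hP : (0:ℝ) ≤ (ν*((k:ℝ)+1)) ^ ν := Real.rpow_nonneg (by positivity) _
  have hratio : y * (ν*((k:ℝ)+1)) ^ ν / ((k:ℝ)+2) ≤ 1/2 := by
    have e1 : (ν*((k:ℝ)+1)) ^ ν ≤ ((k:ℝ)+1) ^ ν :=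
      Real.rpow_le_rpow (by positivity) (by nlinarith) hν0.le
    have e2 : ((k:ℝ)+1) ^ ν / ((k:ℝ)+2) ≤ ((k:ℝ)+1) ^ (ν-1) := by
      rw [Real.rpow_sub (by positivity), Real.rpow_one]
      gcongr
      norm_num
    calc y * (ν*((k:ℝ)+1)) ^ ν / ((k:ℝ)+2) ≤ y * ((k:ℝ)+1) ^ ν / ((k:ℝ)+2) := by
          gcongr
      _ = y * (((k:ℝ)+1) ^ ν / ((k:ℝ)+2)) := by ring
      _ ≤ y * ((k:ℝ)+1) ^ (ν-1) := by gcongr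
      _ ≤ 1/2 := h2.le
  have harg : ν * ((((k+1):ℕ):ℝ)+1) = ν*((k:ℝ)+1) + ν := by push_cast; ring
  have hfact : ((Nat.factorial (k+1+1)):ℝ) = ((k:ℝ)+2) * (Nat.factorial (k+1) : ℝ) := by
    rw [Nat.factorial_succ]; push_cast; ring
  have hGν : 0 < Real.Gamma (ν*((k:ℝ)+1) + ν) := Real.Gamma_pos_of_pos (by positivity)
  rw [Real.norm_eq_abs, Real.norm_eq_abs, abs_of_nonneg (by positivity), abs_of_nonneg (by positivity)]
  rw [harg, hfact]
  calc y ^ (k+1+1) * Real.Gamma (ν*((k:ℝ)+1) + ν) / (((k:ℝ)+2) * (Nat.factorial (k+1) : ℝ))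
      ≤ y ^ (k+1+1) * (Real.Gamma (ν*((k:ℝ)+1)) * (ν*((k:ℝ)+1)) ^ ν) / (((k:ℝ)+2) * (Nat.factorial (k+1) : ℝ)) := by
        gcongr
        exact gamma_add_le _ _ h1 hν0.le hν1.le
    _ = (y * (ν*((k:ℝ)+1)) ^ ν / ((k:ℝ)+2)) * (y ^ (k+1) * Real.Gamma (ν*((k:ℝ)+1)) / (Nat.factorial (k+1) : ℝ)) := by
        have hk2 : ((k:ℝ)+2) ≠ 0 := by positivity
        have hkf : ((Nat.factorial (k+1)):ℝ) ≠ 0 := by positivity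
        field_simp
        ring
    _ ≤ 1/2 * (y ^ (k+1) * Real.Gamma (ν*((k:ℝ)+1)) / (Nat.factorial (k+1) : ℝ)) :=
        mul_le_mul_of_nonneg_right hratio (by positivity)

lemma subst_lemma (ν y c s : ℝ) (hν0 : 0 < ν) (hy : 0 < y) :
    ∫ t in Ioi 0, Real.exp (-t) / t * (Real.exp (-(y*c*t^ν)) * Real.sin (y*s*t^ν))
      = (1/ν) * ∫ u in Ioi 0, Real.exp (-((u/y) ^ ν⁻¹)) * (Real.exp (-(c*u)) * Real.sin (s*u)) / u := by
  have hνinv : (0:ℝ) < ν⁻¹ := inv_pos.2 hν0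
  set F : ℝ → ℝ := fun t => Real.exp (-t) / t * (Real.exp (-(y*c*t^ν)) * Real.sin (y*s*t^ν)) with hF
  -- Part 1 : LHS = (1/ν) * ∫ x in Ioi 0, exp(-(x^ν⁻¹)) * (exp(-(y*c*x)) * sin (y*s*x)) / x
  have part1 : ∫ t in Ioi 0, F t
      = (1/ν) * ∫ x in Ioi 0, Real.exp (-(x ^ ν⁻¹)) * (Real.exp (-(y*c*x)) * Real.sin (y*s*x)) / x := by
    rw [← integral_comp_rpow_Ioi_of_pos (g := F) hνinv, ← MeasureTheory.integral_const_mul]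
    apply setIntegral_congr_fun measurableSet_Ioi
    intro x hx
    have hx0 : (0:ℝ) < x := hx
    have hxv : (0:ℝ) < x ^ ν⁻¹ := Real.rpow_pos_of_pos hx0 _
    have hback : (x ^ ν⁻¹) ^ ν = x := Real.rpow_inv_rpow hx0.le (ne_of_gt hν0)
    simp only [smul_eq_mul, hF]
    rw [hback]
    have hpow : x ^ (ν⁻¹ - 1) = x ^ ν⁻¹ / x := by
      rw [Real.rpow_sub hx0, Real.rpow_one]
    rw [hpow]
    field_simp
  -- Part 2 : RHS integral = ∫ x in Ioi 0, exp(-(x^ν⁻¹)) * (exp(-(y*c*x)) * sin (y*s*x)) / x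
  have part2 : ∫ u in Ioi 0, Real.exp (-((u/y) ^ ν⁻¹)) * (Real.exp (-(c*u)) * Real.sin (s*u)) / u
      = ∫ x in Ioi 0, Real.exp (-(x ^ ν⁻¹)) * (Real.exp (-(y*c*x)) * Real.sin (y*s*x)) / x := by
    set G : ℝ → ℝ := fun u => Real.exp (-((u/y) ^ ν⁻¹)) * (Real.exp (-(c*u)) * Real.sin (s*u)) / u with hG
    have := integral_comp_mul_left_Ioi G 0 hy
    rw [mul_zero] at this
    have h3 : ∫ u in Ioi 0, G u = y * ∫ x in Ioi 0, G (y * x) := by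
      rw [this, smul_eq_mul, ← mul_assoc, mul_inv_cancel₀ (ne_of_gt hy), one_mul]
    rw [h3, ← MeasureTheory.integral_const_mul]
    apply setIntegral_congr_fun measurableSet_Ioi
    intro x hx
    have hx0 : (0:ℝ) < x := hx
    simp only [hG]
    have hdiv : y * x / y = x := by field_simp
    rw [hdiv]
    have h1 : c * (y * x) = y * c * x := by ring
    have h2 : s * (y * x) = y * s * x := by ring
    rw [h1, h2]
    field_simp
  rw [part1, part2]

lemma wright_repr (ν y : ℝ) (hν0 : 0 < ν) (hν2 : ν < 1/2) (hy : 0 < y) :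
    wright (-ν) 1 (-y) = 1 - (1/π) * ∫ t in Ioi 0,
      Real.exp (-t) / t * (Real.exp (-(y * Real.cos (π*ν) * t ^ ν)) * Real.sin (y * Real.sin (π*ν) * t ^ ν)) := by
  have hν1 : ν < 1 := by linarith
  set T : ℕ → ℝ := fun k => (-y) ^ k / ((Nat.factorial k : ℝ) * Real.Gamma (-ν * k + 1)) with hT
  -- basic facts
  have harg : ∀ k : ℕ, -ν * ((k+1 : ℕ) : ℝ) + 1 = 1 - ν * ((k:ℝ)+1) := by
    intro k; push_cast; ring
  have hx0 : ∀ k : ℕ, 0 < ν * ((k:ℝ)+1) := by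
    intro k; positivity
  -- step 2 : closed form of T (k+1)
  have hTk : ∀ k : ℕ, T (k+1) =
      (1/π) * ((-y) ^ (k+1) * Real.sin (π * (ν * ((k:ℝ)+1))) / (Nat.factorial (k+1) : ℝ)
        * Real.Gamma (ν * ((k:ℝ)+1))) := by
    intro k
    rw [hT]
    simp only [div_eq_mul_inv, mul_inv]
    rw [harg k, gamma_one_sub_inv _ (hx0 k)]
    field_simp
  -- summability of T
  have hTsum : Summable T := by
    rw [← summable_nat_add_iff 1]
    apply Summable.of_norm_bounded (((summable_gamma_aux ν y hν0 hν1 hy.le)).mul_left (1/π))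
    intro k
    rw [hTk k, norm_mul, Real.norm_eq_abs, Real.norm_eq_abs]
    have h1 : |1/π| = 1/π := abs_of_pos (by positivity)
    rw [h1]
    apply mul_le_mul_of_nonneg_left _ (by positivity)
    rw [abs_mul, abs_div, abs_mul, abs_pow, abs_neg, abs_of_nonneg hy.le,
      abs_of_nonneg (Real.Gamma_pos_of_pos (hx0 k)).le, abs_of_nonneg (by positivity : (0:ℝ) ≤ (Nat.factorial (k+1) : ℝ))]
    calc y ^ (k+1) * |Real.sin (π * (ν * ((k:ℝ)+1)))| / (Nat.factorial (k+1) : ℝ) * Real.Gamma (ν * ((k:ℝ)+1))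
        ≤ y ^ (k+1) * 1 / (Nat.factorial (k+1) : ℝ) * Real.Gamma (ν * ((k:ℝ)+1)) := by
          gcongr
          exact Real.abs_sin_le_one _
      _ = y ^ (k+1) * Real.Gamma (ν * ((k:ℝ)+1)) / (Nat.factorial (k+1) : ℝ) := by ring
  -- the integrand family
  set g : ℕ → ℝ → ℝ := fun k t =>
      ((-y) ^ (k+1) * Real.sin (π * (ν * ((k:ℝ)+1))) / (Nat.factorial (k+1) : ℝ))
        * (Real.exp (-t) * t ^ (ν * ((k:ℝ)+1) - 1)) with hg
  have hgint : ∀ k : ℕ, IntegrableOn (g k) (Ioi 0) :=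
    fun k => (Real.GammaIntegral_convergent (hx0 k)).const_mul _
  have hTk' : ∀ k : ℕ, T (k+1) = (1/π) * ∫ t in Ioi 0, g k t := by
    intro k
    rw [hTk k, hg]
    simp only []
    rw [MeasureTheory.integral_const_mul, ← Real.Gamma_eq_integral (hx0 k)]
  -- swap sum and integral
  have hnormbound : ∀ k : ℕ, (∫ t in Ioi 0, ‖g k t‖) ≤
      y ^ (k+1) * Real.Gamma (ν * ((k:ℝ)+1)) / (Nat.factorial (k+1) : ℝ) := by
    intro k
    have heq : ∀ t ∈ Ioi (0:ℝ), ‖g k t‖ =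
        |(-y) ^ (k+1) * Real.sin (π * (ν * ((k:ℝ)+1))) / (Nat.factorial (k+1) : ℝ)|
          * (Real.exp (-t) * t ^ (ν * ((k:ℝ)+1) - 1)) := by
      intro t ht
      rw [hg]
      simp only []
      rw [Real.norm_eq_abs, abs_mul]
      congr 1
      exact abs_of_nonneg (mul_nonneg (Real.exp_nonneg _) (Real.rpow_nonneg ht.le _))
    rw [setIntegral_congr_fun measurableSet_Ioi heq, MeasureTheory.integral_const_mul,
      ← Real.Gamma_eq_integral (hx0 k)]
    rw [abs_div, abs_mul, abs_pow, abs_neg, abs_of_nonneg hy.le,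
      abs_of_nonneg (by positivity : (0:ℝ) ≤ (Nat.factorial (k+1) : ℝ))]
    calc y ^ (k+1) * |Real.sin (π * (ν * ((k:ℝ)+1)))| / (Nat.factorial (k+1) : ℝ) * Real.Gamma (ν * ((k:ℝ)+1))
        ≤ y ^ (k+1) * 1 / (Nat.factorial (k+1) : ℝ) * Real.Gamma (ν * ((k:ℝ)+1)) := by
          gcongr
          exact Real.abs_sin_le_one _
      _ = y ^ (k+1) * Real.Gamma (ν * ((k:ℝ)+1)) / (Nat.factorial (k+1) : ℝ) := by ring
  have hswap : ∑' k : ℕ, ∫ t in Ioi 0, g k t = ∫ t in Ioi 0, ∑' k : ℕ, g k t := by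
    apply MeasureTheory.integral_tsum_of_summable_integral_norm hgint
    apply Summable.of_nonneg_of_le
      (fun k => integral_nonneg (fun t => norm_nonneg _)) hnormbound
    exact summable_gamma_aux ν y hν0 hν1 hy.le
  -- pointwise sum via complex exponential
  have hpt : ∀ t ∈ Ioi (0:ℝ), (∑' k : ℕ, g k t) =
      -(Real.exp (-t) / t * (Real.exp (-(y * Real.cos (π*ν) * t ^ ν)) * Real.sin (y * Real.sin (π*ν) * t ^ ν))) := by
    intro t ht
    have ht0 : (0:ℝ) < t := ht
    set r : ℝ := y * t ^ ν with hr
    have hr0 : 0 < r := mul_pos hy (Real.rpow_pos_of_pos ht0 _)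
    set w : ℂ := ((-r : ℝ) : ℂ) * Complex.exp (((π * ν : ℝ) : ℂ) * Complex.I) with hw
    have hsumc : Summable (fun j : ℕ => w ^ j / (Nat.factorial j : ℂ)) :=
      NormedSpace.expSeries_div_summable w
    have hexp : ∑' j : ℕ, w ^ j / (Nat.factorial j : ℂ) = Complex.exp w := by
      rw [Complex.exp_eq_exp_ℂ, NormedSpace.exp_eq_tsum_div]
    have hIm : ∀ j : ℕ, (w ^ j / (Nat.factorial j : ℂ)).im
        = (-r) ^ j * Real.sin (π * ν * j) / (Nat.factorial j : ℝ) := by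
      intro j
      have hwj : w ^ j = (((-r) ^ j : ℝ) : ℂ) * Complex.exp (((π * ν * j : ℝ) : ℂ) * Complex.I) := by
        rw [hw, mul_pow, ← Complex.ofReal_pow]
        congr 1
        rw [← Complex.exp_nat_mul]
        congr 1
        push_cast
        ring
      rw [hwj, Complex.exp_mul_I, ← Complex.ofReal_cos, ← Complex.ofReal_sin]
      simp [mul_add, ← Complex.ofReal_mul, ← Complex.ofReal_neg, ← Complex.ofReal_pow,
        Complex.cos_ofReal_re, Complex.sin_ofReal_re]
      try ring
    -- w components
    have hwre : w.re = -(r * Real.cos (π * ν)) := by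
      rw [hw, Complex.exp_mul_I, ← Complex.ofReal_cos, ← Complex.ofReal_sin]
      simp [mul_add, ← Complex.ofReal_mul, ← Complex.ofReal_neg, ← Complex.ofReal_pow,
        Complex.cos_ofReal_re, Complex.sin_ofReal_re]
      try ring
    have hwim : w.im = -(r * Real.sin (π * ν)) := by
      rw [hw, Complex.exp_mul_I, ← Complex.ofReal_cos, ← Complex.ofReal_sin]
      simp [mul_add, ← Complex.ofReal_mul, ← Complex.ofReal_neg, ← Complex.ofReal_pow,
        Complex.cos_ofReal_re, Complex.sin_ofReal_re]
      try ring
    have hImexp : (Complex.exp w).im = -(Real.exp (-(r * Real.cos (π * ν))) * Real.sin (r * Real.sin (π * ν))) := by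
      rw [Complex.exp_im, hwre, hwim, Real.sin_neg]
      ring
    -- HasSum of the imaginary parts
    have hImhs : HasSum (fun j : ℕ => (w ^ j / (Nat.factorial j : ℂ)).im) ((Complex.exp w).im) := by
      have h := hsumc.hasSum.mapL Complex.imCLM
      rw [hexp] at h
      exact h
    have hImsum : Summable (fun j : ℕ => (w ^ j / (Nat.factorial j : ℂ)).im) := hImhs.summable
    have hImtsum : ∑' j : ℕ, (w ^ j / (Nat.factorial j : ℂ)).im = (Complex.exp w).im := hImhs.tsum_eq
    -- relate g k t to shifted Im terms
    have hgk : ∀ k : ℕ, g k t = Real.exp (-t) / t * ((w ^ (k+1) / (Nat.factorial (k+1) : ℂ)).im) := by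
      intro k
      rw [hIm (k+1), hg]
      simp only []
      have htpow : t ^ (ν * ((k:ℝ)+1) - 1) = (t ^ ν) ^ (k+1) / t := by
        rw [Real.rpow_sub ht0, Real.rpow_one]
        congr 1
        rw [Real.rpow_mul ht0.le]
        have : ((k:ℝ)+1) = ((k+1 : ℕ) : ℝ) := by push_cast; ring
        rw [this, Real.rpow_natCast]
      rw [htpow]
      have hsin : Real.sin (π * ν * ((k+1 : ℕ) : ℝ)) = Real.sin (π * (ν * ((k:ℝ)+1))) := by
        congr 1
        push_cast
        ring
      rw [hsin]
      have hpowr : (-r) ^ (k+1) = (-y) ^ (k+1) * (t ^ ν) ^ (k+1) := by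
        rw [hr, ← neg_mul, mul_pow]
      rw [hpowr]
      field_simp
    -- assemble the tsum
    calc (∑' k : ℕ, g k t)
        = ∑' k : ℕ, Real.exp (-t) / t * ((w ^ (k+1) / (Nat.factorial (k+1) : ℂ)).im) := by
          exact tsum_congr hgk
      _ = Real.exp (-t) / t * ∑' k : ℕ, (w ^ (k+1) / (Nat.factorial (k+1) : ℂ)).im := by
          exact tsum_mul_left
      _ = Real.exp (-t) / t * ((Complex.exp w).im - (w ^ 0 / (Nat.factorial 0 : ℂ)).im) := by
          congr 1
          have := Summable.tsum_eq_zero_add hImsum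
          rw [hImtsum] at this
          linarith [this]
      _ = -(Real.exp (-t) / t * (Real.exp (-(y * Real.cos (π*ν) * t ^ ν)) * Real.sin (y * Real.sin (π*ν) * t ^ ν))) := by
          rw [hImexp, hr]
          norm_num
          ring_nf
          try tauto
  have h0 : T 0 = 1 := by
    rw [hT]
    simp
  calc wright (-ν) 1 (-y) = ∑' k : ℕ, T k := rfl
    _ = T 0 + ∑' k : ℕ, T (k+1) := Summable.tsum_eq_zero_add hTsum
    _ = 1 + (1/π) * ∑' k : ℕ, ∫ t in Ioi 0, g k t := by
        rw [h0, ← tsum_mul_left]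
        congr 1
        exact tsum_congr hTk'
    _ = 1 + (1/π) * ∫ t in Ioi 0, ∑' k : ℕ, g k t := by rw [hswap]
    _ = 1 + (1/π) * ∫ t in Ioi 0,
          -(Real.exp (-t) / t * (Real.exp (-(y * Real.cos (π*ν) * t ^ ν)) * Real.sin (y * Real.sin (π*ν) * t ^ ν))) := by
        congr 1
        congr 1
        exact setIntegral_congr_fun measurableSet_Ioi (fun t ht => hpt t ht)
    _ = 1 - (1/π) * ∫ t in Ioi 0,
          Real.exp (-t) / t * (Real.exp (-(y * Real.cos (π*ν) * t ^ ν)) * Real.sin (y * Real.sin (π*ν) * t ^ ν)) := by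
        rw [integral_neg]
        ring

/-- For `0 < α < 1`, the similarity profile decays at infinity:
`W(−y; −α/2, 1) → 0` as `y → +∞`. -/
theorem wright_tendsto_zero_atTop (α : ℝ) (hα : α ∈ Set.Ioo (0:ℝ) 1) :
    Tendsto (fun y : ℝ => wright (-(α / 2)) 1 (-y)) atTop (nhds 0) := by
  obtain ⟨hα0, hα1⟩ := hα
  set ν : ℝ := α/2 with hνdef
  have hν0 : 0 < ν := by rw [hνdef]; linarith
  have hν2 : ν < 1/2 := by rw [hνdef]; linarith
  have hπ := Real.pi_pos
  have hπν0 : 0 < π*ν := by positivity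
  have hπν : π*ν < π/2 := by nlinarith
  have hc : 0 < Real.cos (π*ν) := Real.cos_pos_of_mem_Ioo ⟨by linarith, hπν⟩
  have hs : 0 < Real.sin (π*ν) := Real.sin_pos_of_pos_of_lt_pi hπν0 (by nlinarith)
  set K : ℝ → ℝ := fun y => ∫ u in Ioi 0,
    Real.exp (-((u/y) ^ ν⁻¹)) * (Real.exp (-(Real.cos (π*ν)*u)) * Real.sin (Real.sin (π*ν)*u)) / u with hK
  have hKlim : Tendsto K atTop (nhds (π*ν)) := by
    have harctan : Real.arctan (Real.sin (π*ν) / Real.cos (π*ν)) = π*ν := by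
      rw [← Real.tan_eq_sin_div_cos]
      exact Real.arctan_tan (by linarith) hπν
    rw [← harctan, ← integral_exp_sin_div (Real.cos (π*ν)) (Real.sin (π*ν)) hc]
    apply tendsto_integral_filter_of_dominated_convergence
      (bound := fun u => Real.exp (-(Real.cos (π*ν)*u)) * Real.sin (π*ν))
    · filter_upwards [eventually_gt_atTop (0:ℝ)] with y hy
      apply ContinuousOn.aestronglyMeasurable ?_ measurableSet_Ioi
      apply ContinuousOn.div
      · apply Continuous.continuousOn
        apply Continuous.mul
        · apply Real.continuous_exp.comp
          apply Continuous.neg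
          exact (continuous_id.div_const y).rpow_const (fun x => Or.inr (inv_pos.2 hν0).le)
        · exact (Real.continuous_exp.comp (continuous_const.mul continuous_id).neg).mul
            (Real.continuous_sin.comp (continuous_const.mul continuous_id))
      · exact continuous_id.continuousOn
      · exact fun u hu => ne_of_gt hu
    · filter_upwards [eventually_gt_atTop (0:ℝ)] with y hy
      filter_upwards [ae_restrict_mem measurableSet_Ioi] with u hu
      have hu0 : (0:ℝ) < u := hu
      have he1 : Real.exp (-((u/y) ^ ν⁻¹)) ≤ 1 := by
        rw [Real.exp_le_one_iff, neg_nonpos]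
        exact Real.rpow_nonneg (div_nonneg hu0.le hy.le) _
      have hX : Real.exp (-((u/y) ^ ν⁻¹)) * (Real.exp (-(Real.cos (π*ν)*u)) * Real.sin (Real.sin (π*ν)*u)) / u
          = (Real.exp (-((u/y) ^ ν⁻¹)) * Real.exp (-(Real.cos (π*ν)*u))) * (Real.sin (Real.sin (π*ν)*u) / u) := by
        ring
      rw [Real.norm_eq_abs, hX, abs_mul]
      calc |Real.exp (-((u/y) ^ ν⁻¹)) * Real.exp (-(Real.cos (π*ν)*u))| * |Real.sin (Real.sin (π*ν)*u) / u|
          ≤ (1 * Real.exp (-(Real.cos (π*ν)*u))) * |Real.sin (π*ν)| := by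
            apply mul_le_mul ?_ (abs_sin_mul_div_le _ _ hu0) (abs_nonneg _) (by positivity)
            rw [abs_mul, abs_exp, abs_exp]
            exact mul_le_mul_of_nonneg_right he1 (Real.exp_nonneg _)
        _ = Real.exp (-(Real.cos (π*ν)*u)) * Real.sin (π*ν) := by
            rw [one_mul, abs_of_pos hs]
    · simpa [neg_mul] using (exp_neg_integrableOn_Ioi 0 hc).mul_const (Real.sin (π*ν))
    · filter_upwards [ae_restrict_mem measurableSet_Ioi] with u hu
      have hu0 : (0:ℝ) < u := hu
      have h1 : Tendsto (fun y : ℝ => (u/y) ^ ν⁻¹) atTop (nhds 0) := by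
        have hd : Tendsto (fun y : ℝ => u/y) atTop (nhds 0) :=
          tendsto_const_nhds.div_atTop tendsto_id
        have hcont : ContinuousAt (fun x : ℝ => x ^ ν⁻¹) 0 :=
          Real.continuousAt_rpow_const 0 ν⁻¹ (Or.inr (inv_pos.2 hν0).le)
        have := hcont.tendsto.comp hd
        simpa [Real.zero_rpow (ne_of_gt (inv_pos.2 hν0)), Function.comp_def] using this
      have h2 : Tendsto (fun y : ℝ => Real.exp (-((u/y) ^ ν⁻¹))) atTop (nhds 1) := by
        have h1n : Tendsto (fun y : ℝ => -((u/y) ^ ν⁻¹)) atTop (nhds 0) := by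
          simpa using h1.neg
        have := (Real.continuous_exp.continuousAt (x := (0:ℝ))).tendsto.comp h1n
        simpa [Function.comp_def] using this
      have h3 := h2.mul_const ((Real.exp (-(Real.cos (π*ν)*u)) * Real.sin (Real.sin (π*ν)*u)) / u)
      rw [one_mul] at h3
      apply h3.congr
      intro y
      ring
  have hrepr : ∀ᶠ y in atTop, 1 - (1/π) * ((1/ν) * K y) = wright (-ν) 1 (-y) := by
    filter_upwards [eventually_gt_atTop (0:ℝ)] with y hy
    rw [wright_repr ν y hν0 hν2 hy,
      subst_lemma ν y (Real.cos (π*ν)) (Real.sin (π*ν)) hν0 hy]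
  have hlim : Tendsto (fun y : ℝ => 1 - (1/π) * ((1/ν) * K y)) atTop
      (nhds (1 - (1/π) * ((1/ν) * (π*ν)))) :=
    tendsto_const_nhds.sub (((hKlim.const_mul (1/ν)).const_mul (1/π)))
  have hval : (1:ℝ) - (1/π) * ((1/ν) * (π*ν)) = 0 := by
    field_simp
    norm_num
  rw [hval] at hlim
  exact hlim.congr' hrepr
end

section
/- Let 0 < α < 1, κ₁, κ₂, λ₁, λ₂ > 0, c ∈ ℝ, and assume W(−p/√κ₁; −α/2, 1) ≠ 1 and W(−p/√κ₂; −α/2, 1) ≠ 0. Suppose p > 0 satisfies the transcendental equation p · Γ(1 + α/2)/Γ(1 − α/2) = (λ₂/√κ₂) · c · W(−p/√κ₂; −α/2, 1 − α/2) / W(−p/√κ₂; −α/2, 1) − (λ₁/√κ₁) · W(−p/√κ₁; −α/2, 1 − α/2) / (W(−p/√κ₁; −α/2, 1) − 1). Define S(τ) = p τ^{α/2}, u₁(x, τ) = 1 − (W(−x/(√κ₁ τ^{α/2}); −α/2, 1) − 1)/(W(−p/√κ₁; −α/2, 1) − 1), and u₂(x, τ) = c · (W(−p/√κ₂; −α/2,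 1) − W(−x/(√κ₂ τ^{α/2}); −α/2, 1))/W(−p/√κ₂; −α/2, 1). Then for every τ > 0 the fractional Stefan condition holds: ᶜD₀₊^α S(τ) = λ₂ (∂u₂/∂x)(S(τ), τ) − λ₁ (∂u₁/∂x)(S(τ), τ). -/
open Real MeasureTheory

/-- The left-sided Caputo fractional derivative of order `α ∈ (0,1)`:
`(ᶜD₀₊^α f)(t) = (1/Γ(1−α)) ∫₀ᵗ (t−u)^(−α) f'(u) du`. -/
noncomputable def caputoDeriv (α : ℝ) (f : ℝ → ℝ) (t : ℝ) : ℝ :=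
  (1 / Real.Gamma (1 - α)) * ∫ u in (0:ℝ)..t, (t - u) ^ (-α) * deriv f u

/-- The liquid-phase profile
`u₁(x, τ) = 1 − (W(−x/(√κ₁ τ^(α/2)); −α/2, 1) − 1)/(W(−p/√κ₁; −α/2, 1) − 1)`. -/
noncomputable def liquidProfile (α κ₁ p x τ : ℝ) : ℝ :=
  1 - (wright (-(α / 2)) 1 (-x / (Real.sqrt κ₁ * τ ^ (α / 2))) - 1) /
      (wright (-(α / 2)) 1 (-p / Real.sqrt κ₁) - 1)

/-- The solid-phase profile
`u₂(x, τ) = c (W(−p/√κ₂; −α/2, 1) − W(−x/(√κ₂ τ^(α/2)); −α/2, 1))/W(−p/√κ₂; −α/2, 1)`. -/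
noncomputable def solidProfile (α κ₂ p c x τ : ℝ) : ℝ :=
  c * (wright (-(α / 2)) 1 (-p / Real.sqrt κ₂) -
        wright (-(α / 2)) 1 (-x / (Real.sqrt κ₂ * τ ^ (α / 2)))) /
      wright (-(α / 2)) 1 (-p / Real.sqrt κ₂)


set_option maxHeartbeats 1000000
section WrightAux
open Filter Metric intervalIntegral

/-- Gautschi-type bound from log-convexity. -/
lemma gamma_gautschi {x s : ℝ} (hx : 0 < x) (hs0 : 0 ≤ s) (hs1 : s ≤ 1) :
    Real.Gamma (x + s) ≤ Real.Gamma x * x ^ s := by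
  have hgx : 0 < Real.Gamma x := Real.Gamma_pos_of_pos hx
  have hgx1 : 0 < Real.Gamma (x + 1) := Real.Gamma_pos_of_pos (by linarith)
  have hgxs : 0 < Real.Gamma (x + s) := Real.Gamma_pos_of_pos (by linarith)
  have hc := Real.convexOn_log_Gamma.2 (Set.mem_Ioi.mpr hx)
    (Set.mem_Ioi.mpr (by linarith : (0:ℝ) < x + 1)) (by linarith : (0:ℝ) ≤ 1 - s) hs0
    (by ring)
  simp only [smul_eq_mul, Function.comp_apply] at hc
  have harg : (1 - s) * x + s * (x + 1) = x + s := by ring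
  rw [harg] at hc
  have hG1 : Real.Gamma (x + 1) = x * Real.Gamma x := Real.Gamma_add_one hx.ne'
  rw [hG1, Real.log_mul hx.ne' hgx.ne'] at hc
  have : Real.log (Real.Gamma (x + s)) ≤ Real.log (Real.Gamma x) + s * Real.log x := by
    nlinarith [hc]
  calc Real.Gamma (x + s) = Real.exp (Real.log (Real.Gamma (x + s))) := (Real.exp_log hgxs).symm
    _ ≤ Real.exp (Real.log (Real.Gamma x) + s * Real.log x) := Real.exp_le_exp.mpr this
    _ = Real.Gamma x * x ^ s := by
        rw [Real.exp_add, Real.exp_log hgx, Real.rpow_def_of_pos hx, mul_comm (Real.log x)]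

/-- Reflection bound for the reciprocal Gamma at nonpositive arguments. -/
lemma recip_gamma_bound {x : ℝ} (hx : x ≤ 0) :
    |(Real.Gamma x)⁻¹| ≤ Real.Gamma (1 - x) / π := by
  have h1x : 0 < Real.Gamma (1 - x) := Real.Gamma_pos_of_pos (by linarith)
  by_cases hG : Real.Gamma x = 0
  · rw [hG]; simp [le_div_iff₀ Real.pi_pos]; positivity
  · have hsin : Real.sin (π * x) ≠ 0 := by
      intro hs
      rcases Real.sin_eq_zero_iff.mp hs with ⟨n, hn⟩
      have hxn : x = (n : ℝ) := by
        have hpi := Real.pi_ne_zero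
        have : π * (n : ℝ) = π * x := by linarith [hn]
        exact (mul_left_cancel₀ hpi this).symm
      have hn0 : n ≤ 0 := by exact_mod_cast hxn ▸ hx
      exact hG (Real.Gamma_eq_zero_iff x |>.mpr ⟨(-n).toNat, by
        rw [hxn]; exact_mod_cast (by omega : (n:ℤ) = -((-n).toNat : ℤ))⟩)
    have href := Real.Gamma_mul_Gamma_one_sub x
    have hinv : (Real.Gamma x)⁻¹ = Real.sin (π * x) * Real.Gamma (1 - x) / π := by
      field_simp at href
      have h2 : (Real.Gamma x)⁻¹ * π
          = (Real.Gamma x)⁻¹ * (Real.Gamma x * Real.Gamma (1 - x) * Real.sin (π * x)) := by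
        rw [href, mul_comm x π, div_mul_cancel₀ _ hsin]
      rw [eq_div_iff Real.pi_ne_zero, h2]
      field_simp
    rw [hinv, abs_div, abs_mul, abs_of_pos Real.pi_pos, abs_of_pos h1x]
    gcongr
    calc |Real.sin (π * x)| * Real.Gamma (1-x) ≤ 1 * Real.Gamma (1-x) :=
      mul_le_mul_of_nonneg_right (Real.abs_sin_le_one (π*x)) h1x.le
    _ = Real.Gamma (1-x) := one_mul _


lemma wright_aux_summable (g e R : ℝ) (hg0 : 0 < g) (hg1 : g < 1) :
    Summable (fun k : ℕ => R ^ k * Real.Gamma (g * k + e) / k.factorial) := by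
  apply summable_of_ratio_norm_eventually_le (r := 1/2) (by norm_num)
  have hT : Tendsto (fun k : ℕ => g * (k : ℝ) + e) atTop atTop :=
    tendsto_atTop_add_const_right _ e
      (tendsto_natCast_atTop_atTop.const_mul_atTop hg0)
  have h1 : ∀ᶠ k : ℕ in atTop, 1 ≤ g * (k : ℝ) + e := hT.eventually_ge_atTop 1
  have hle : ∀ᶠ k : ℕ in atTop, g * (k : ℝ) + e ≤ (k : ℝ) + 1 := by
    have : Tendsto (fun k : ℕ => (1 - g) * (k : ℝ)) atTop atTop :=
      tendsto_natCast_atTop_atTop.const_mul_atTop (by linarith)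
    filter_upwards [this.eventually_ge_atTop (e - 1)] with k hk
    nlinarith
  have hRb : ∀ᶠ k : ℕ in atTop, |R| * ((k:ℝ) + 1) ^ g ≤ 1/2 * ((k:ℝ) + 1) := by
    have hT2 : Tendsto (fun k : ℕ => ((k:ℝ) + 1) ^ (1 - g)) atTop atTop :=
      (tendsto_rpow_atTop (by linarith)).comp
        (tendsto_atTop_add_const_right _ 1 tendsto_natCast_atTop_atTop)
    filter_upwards [hT2.eventually_ge_atTop (2 * |R|)] with k hk
    have hk1 : (0:ℝ) < (k:ℝ) + 1 := by positivity
    have hsplit : ((k:ℝ) + 1) = ((k:ℝ)+1) ^ (1-g) * ((k:ℝ)+1) ^ g := by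
      rw [← Real.rpow_add hk1]; norm_num
    have hpg : (0:ℝ) ≤ ((k:ℝ)+1) ^ g := Real.rpow_nonneg hk1.le g
    calc |R| * ((k:ℝ)+1)^g ≤ (1/2 * ((k:ℝ)+1)^(1-g)) * ((k:ℝ)+1)^g := by
          apply mul_le_mul_of_nonneg_right (by linarith) hpg
      _ = 1/2 * (((k:ℝ)+1)^(1-g) * ((k:ℝ)+1)^g) := by ring
      _ = 1/2 * ((k:ℝ)+1) := by rw [← Real.rpow_add hk1]; norm_num
  have h2 : ∀ᶠ k : ℕ in atTop, |R| * (g * (k:ℝ) + e) ^ g ≤ 1/2 * ((k:ℝ) + 1) := by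
    filter_upwards [h1, hle, hRb] with k hk1 hkle hkR
    refine le_trans ?_ hkR
    apply mul_le_mul_of_nonneg_left _ (abs_nonneg R)
    exact Real.rpow_le_rpow (by linarith) hkle hg0.le
  filter_upwards [h1, h2] with k hk1 hk2
  have hx : (0:ℝ) < g * k + e := by linarith
  have hgpos : 0 < Real.Gamma (g * k + e) := Real.Gamma_pos_of_pos hx
  have harg : g * ((k:ℕ)+1 : ℕ) + e = (g * k + e) + g := by push_cast; ring
  have hgau := gamma_gautschi hx hg0.le hg1.le
  have hgpos' : 0 < Real.Gamma ((g * k + e) + g) := Real.Gamma_pos_of_pos (by linarith)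
  have hfac : (((k+1).factorial : ℕ) : ℝ) = ((k:ℝ)+1) * (k.factorial : ℝ) := by
    rw [Nat.factorial_succ]; push_cast; ring
  have hfp : (0:ℝ) < (k.factorial : ℝ) := by positivity
  rw [Real.norm_eq_abs, Real.norm_eq_abs, abs_div, abs_div, abs_mul, abs_mul, abs_pow, abs_pow, harg,
    abs_of_pos hgpos, abs_of_pos hgpos', Nat.abs_cast, Nat.abs_cast, hfac, pow_succ]
  have hpg : (0:ℝ) ≤ (g*k+e) ^ g := Real.rpow_nonneg hx.le g
  calc |R|^k * |R| * Real.Gamma ((g*k+e)+g) / (((k:ℝ)+1) * k.factorial)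
      ≤ |R|^k * |R| * (Real.Gamma (g*k+e) * (g*k+e)^g) / (((k:ℝ)+1) * k.factorial) := by
        gcongr
    _ = (|R| * (g*k+e)^g) * (|R|^k * Real.Gamma (g*k+e)) / (((k:ℝ)+1) * k.factorial) := by
        ring
    _ ≤ (1/2 * ((k:ℝ)+1)) * (|R|^k * Real.Gamma (g*k+e)) / (((k:ℝ)+1) * k.factorial) := by
        gcongr
    _ = 1/2 * (|R|^k * Real.Gamma (g*k+e) / k.factorial) := by
        field_simp

lemma wright_deriv_bound_summable (g δ R : ℝ) (hg0 : 0 < g) (hg1 : g < 1) (hR : 0 ≤ R) :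
    Summable (fun n : ℕ =>
      (n : ℝ) * R ^ (n - 1) * |(((n.factorial : ℕ) : ℝ) * Real.Gamma (-g * n + δ))⁻¹|) := by
  rw [← summable_nat_add_iff 1]
  simp only [Nat.add_sub_cancel]
  apply Summable.of_norm_bounded_eventually_nat
      (g := fun n => R ^ n * Real.Gamma (g * n + (g + 1 - δ)) / n.factorial / π)
      (((wright_aux_summable g (g + 1 - δ) R hg0 hg1)).div_const π)
  have hT : Tendsto (fun n : ℕ => g * ((n:ℝ)+1)) atTop atTop :=
    (tendsto_atTop_add_const_right _ 1 tendsto_natCast_atTop_atTop).const_mul_atTop hg0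
  filter_upwards [hT.eventually_ge_atTop δ] with n hn
  have harg : -g * ((n:ℕ)+1 : ℕ) + δ ≤ 0 := by push_cast; nlinarith
  have hbound := recip_gamma_bound harg
  have h1x : 1 - (-g * ((n:ℕ)+1 : ℕ) + δ) = g * n + (g + 1 - δ) := by push_cast; ring
  rw [h1x] at hbound
  have hfac : (((n+1).factorial : ℕ) : ℝ) = ((n:ℝ)+1) * (n.factorial : ℝ) := by
    rw [Nat.factorial_succ]; push_cast; ring
  have hfp : (0:ℝ) < (n.factorial : ℝ) := by positivity
  have hn1 : (0:ℝ) < (n:ℝ) + 1 := by positivity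
  have hRp : (0:ℝ) ≤ R ^ n := pow_nonneg hR n
  have hsimp : ((n:ℕ)+1 : ℕ) - 1 = n := by omega
  have key : ((n:ℝ)+1) * R ^ n *
      |((((n+1).factorial : ℕ) : ℝ) * Real.Gamma (-g * ((n:ℝ)+1) + δ))⁻¹| ≤
      R ^ n * Real.Gamma (g * n + (g + 1 - δ)) / n.factorial / π := by
    rw [mul_inv, abs_mul, abs_inv, Nat.abs_cast, hfac]
    have e1 : ((n:ℝ)+1) * R ^ n * ((((n:ℝ)+1) * (n.factorial:ℝ))⁻¹ *
        |(Real.Gamma (-g * ((n:ℝ)+1) + δ))⁻¹|)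
        = R ^ n * (n.factorial:ℝ)⁻¹ * |(Real.Gamma (-g * ((n:ℝ)+1) + δ))⁻¹| := by
      field_simp
    rw [e1]
    calc R ^ n * (n.factorial:ℝ)⁻¹ * |(Real.Gamma (-g * ((n:ℝ)+1) + δ))⁻¹|
        ≤ R ^ n * (n.factorial:ℝ)⁻¹ * (Real.Gamma (g * n + (g + 1 - δ)) / π) := by
          apply mul_le_mul_of_nonneg_left _ (by positivity)
          convert hbound using 3
          · rfl
          · push_cast; ring
      _ = R ^ n * Real.Gamma (g * n + (g + 1 - δ)) / n.factorial / π := by ring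
  rw [Real.norm_eq_abs, abs_of_nonneg (by positivity)]

  convert key using 3 <;> (push_cast; try ring) <;> rfl



lemma wright_hasDerivAt (g δ : ℝ) (hg0 : 0 < g) (hg1 : g < 1) (z : ℝ) :
    HasDerivAt (fun y => wright (-g) δ y) (wright (-g) (-g + δ) z) z := by
  set R : ℝ := |z| + 1 with hRdef
  have hR0 : (0:ℝ) < R := by positivity
  set a : ℕ → ℝ := fun n => ((n.factorial : ℝ) * Real.Gamma (-g * n + δ))⁻¹ with ha
  set f : ℕ → ℝ → ℝ := fun n y => y ^ n * a n with hfdef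
  set f' : ℕ → ℝ → ℝ := fun n y => ((n:ℝ) * y ^ (n - 1)) * a n with hf'def
  set u : ℕ → ℝ := fun n => (n:ℝ) * R ^ (n - 1) * |a n| with hu'
  have hu : Summable u := wright_deriv_bound_summable g δ R hg0 hg1 hR0.le
  have hf : ∀ n y, y ∈ ball (0:ℝ) R → HasDerivAt (f n) (f' n y) y := fun n y _ =>
    (hasDerivAt_pow n y).mul_const (a n)
  have hbound : ∀ n y, y ∈ ball (0:ℝ) R → ‖f' n y‖ ≤ u n := by
    intro n y hy
    rw [mem_ball, dist_zero_right, Real.norm_eq_abs] at hy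
    simp only [hf'def, hu', Real.norm_eq_abs, abs_mul, Nat.abs_cast, abs_pow]
    have h1 : |y| ^ (n-1) ≤ R ^ (n-1) := pow_le_pow_left₀ (abs_nonneg y) hy.le _
    have h2 : (0:ℝ) ≤ (n:ℝ) := Nat.cast_nonneg n
    exact mul_le_mul_of_nonneg_right (mul_le_mul_of_nonneg_left h1 h2) (abs_nonneg _)
  have h0 : Summable (fun n => f n 0) := by
    apply summable_of_ne_finset_zero (s := {0})
    intro n hn
    simp only [hfdef]
    rw [zero_pow (by simpa using hn), zero_mul]
  have hz : z ∈ ball (0:ℝ) R := by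
    rw [mem_ball, dist_zero_right, Real.norm_eq_abs]; simp [hRdef]
  have h00 : (0:ℝ) ∈ ball (0:ℝ) R := by simpa [mem_ball] using hR0
  have H := hasDerivAt_tsum_of_isPreconnected hu isOpen_ball
    (convex_ball (0:ℝ) R).isPreconnected hf hbound h00 h0 hz
  have hfun : (fun y => ∑' n, f n y) = fun y => wright (-g) δ y := by
    funext y
    simp only [wright, hfdef, ha, div_eq_mul_inv]
  rw [hfun] at H
  have hs' : Summable (fun n => f' n z) :=
    hu.of_norm_bounded (fun n => hbound n z hz)
  have hval : ∑' n, f' n z = wright (-g) (-g + δ) z := by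
    rw [Summable.tsum_eq_zero_add hs']
    have e0 : f' 0 z = 0 := by simp [hf'def]
    rw [e0, zero_add]
    have e1 : ∀ n : ℕ, f' (n+1) z = z ^ n / ((n.factorial : ℝ) * Real.Gamma (-g * n + (-g + δ))) := by
      intro n
      simp only [hf'def, ha, Nat.add_sub_cancel]
      have harg : -g * ((n:ℕ)+1 : ℕ) + δ = -g * n + (-g + δ) := by push_cast; ring
      rw [harg]
      have hfac : (((n+1).factorial : ℕ) : ℝ) = ((n:ℝ)+1) * (n.factorial : ℝ) := by
        rw [Nat.factorial_succ]; push_cast; ring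
      have hn1 : ((n:ℝ)+1) ≠ 0 := by positivity
      rw [hfac, div_eq_mul_inv, mul_inv, mul_inv]
      push_cast
      calc ((n:ℝ)+1) * z ^ n * ((((n:ℝ)+1)⁻¹ * ((n.factorial:ℝ))⁻¹) *
            (Real.Gamma (-g * n + (-g + δ)))⁻¹)
          = (((n:ℝ)+1) * ((n:ℝ)+1)⁻¹) * (z ^ n * (((n.factorial:ℝ))⁻¹ *
            (Real.Gamma (-g * n + (-g + δ)))⁻¹)) := by ring
        _ = z ^ n * (((n.factorial:ℝ))⁻¹ * (Real.Gamma (-g * n + (-g + δ)))⁻¹) := by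
            rw [mul_inv_cancel₀ hn1, one_mul]
        _ = z ^ n * (((n.factorial:ℝ)) * Real.Gamma (-g * n + (-g + δ)))⁻¹ := by
            rw [mul_inv]
    rw [tsum_congr e1]
    rfl
  rwa [hval] at H


/-- Real Beta-Gamma relation. -/
lemma real_beta (u v : ℝ) (hu : 0 < u) (hv : 0 < v) :
    Real.Gamma u * Real.Gamma v =
      Real.Gamma (u + v) * ∫ x in (0:ℝ)..1, x ^ (u - 1) * (1 - x) ^ (v - 1) := by
  have hbc := Complex.Gamma_mul_Gamma_eq_betaIntegral (s := (u:ℂ)) (t := (v:ℂ))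
    (by simpa using hu) (by simpa using hv)
  have hbeta : Complex.betaIntegral (u:ℂ) (v:ℂ) =
      ((∫ x in (0:ℝ)..1, x ^ (u - 1) * (1 - x) ^ (v - 1) : ℝ) : ℂ) := by
    rw [Complex.betaIntegral, ← intervalIntegral.integral_ofReal]
    apply intervalIntegral.integral_congr
    intro x hx
    rw [Set.uIcc_of_le (by norm_num : (0:ℝ) ≤ 1)] at hx
    obtain ⟨hx0, hx1⟩ := hx
    dsimp only
    rw [Complex.ofReal_mul, Complex.ofReal_cpow hx0,
      Complex.ofReal_cpow (by linarith : (0:ℝ) ≤ 1 - x)]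
    push_cast
    ring
  rw [hbeta] at hbc
  have := hbc
  rw [← Complex.ofReal_add] at this
  rw [Complex.Gamma_ofReal, Complex.Gamma_ofReal, Complex.Gamma_ofReal] at this
  exact_mod_cast this

lemma caputo_rpow (α p : ℝ) (hα : α ∈ Set.Ioo (0:ℝ) 1) (S : ℝ → ℝ)
    (hS : ∀ t : ℝ, 0 ≤ t → S t = p * t ^ (α / 2)) {τ : ℝ} (hτ : 0 < τ) :
    caputoDeriv α S τ =
      p * (Real.Gamma (1 + α / 2) / Real.Gamma (1 - α / 2)) * τ ^ (-(α / 2)) := by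
  obtain ⟨hα0, hα1⟩ := hα
  set m : ℝ := α / 2 with hm
  have hm0 : 0 < m := by positivity
  have hm1 : m < 1 := by simp [hm]; linarith
  -- step 1: rewrite the integrand
  have hstep1 : (∫ u in (0:ℝ)..τ, (τ - u) ^ (-α) * deriv S u)
      = ∫ u in (0:ℝ)..τ, (τ - u) ^ (-α) * (p * (m * u ^ (m - 1))) := by
    apply intervalIntegral.integral_congr_ae
    apply Filter.Eventually.of_forall
    intro u hu
    rw [Set.uIoc_of_le hτ.le] at hu
    have hu0 : 0 < u := hu.1
    have hev : S =ᶠ[nhds u] fun t => p * t ^ m := by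
      filter_upwards [Ioi_mem_nhds hu0] with t ht
      exact hS t (le_of_lt ht)
    rw [hev.deriv_eq, ((Real.hasDerivAt_rpow_const (p := m) (Or.inl hu0.ne')).const_mul p).deriv]
  -- step 2: substitution u = τ x
  have hstep2 : (∫ u in (0:ℝ)..τ, (τ - u) ^ (-α) * (p * (m * u ^ (m - 1))))
      = τ * ∫ x in (0:ℝ)..1, (τ - τ * x) ^ (-α) * (p * (m * (τ * x) ^ (m - 1))) := by
    rw [intervalIntegral.integral_comp_mul_left
      (fun u => (τ - u) ^ (-α) * (p * (m * u ^ (m - 1)))) hτ.ne']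
    rw [mul_zero, mul_one, smul_eq_mul, ← mul_assoc, mul_inv_cancel₀ hτ.ne', one_mul]
  -- step 3: pointwise simplification
  have hstep3 : (∫ x in (0:ℝ)..1, (τ - τ * x) ^ (-α) * (p * (m * (τ * x) ^ (m - 1))))
      = (p * m * (τ ^ (-α) * τ ^ (m - 1))) *
        ∫ x in (0:ℝ)..1, x ^ (m - 1) * (1 - x) ^ (-α) := by
    rw [← intervalIntegral.integral_const_mul]
    apply intervalIntegral.integral_congr
    intro x hx
    rw [Set.uIcc_of_le (by norm_num : (0:ℝ) ≤ 1)] at hx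
    obtain ⟨hx0, hx1⟩ := hx
    dsimp only
    have e1 : τ - τ * x = τ * (1 - x) := by ring
    rw [e1, Real.mul_rpow hτ.le (by linarith), Real.mul_rpow hτ.le hx0]
    ring
  -- step 4: beta evaluation
  have hαm : 1 - α > 0 := by linarith
  have hbeta := real_beta m (1 - α) hm0 hαm
  have hsumarg : m + (1 - α) = 1 - m := by rw [hm]; ring
  rw [hsumarg] at hbeta
  have hexp : (1:ℝ) - α - 1 = -α := by ring
  rw [hexp] at hbeta
  have hG1m : Real.Gamma (1 - m) ≠ 0 := (Real.Gamma_pos_of_pos (by linarith)).ne'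
  have hG1α : Real.Gamma (1 - α) ≠ 0 := (Real.Gamma_pos_of_pos hαm).ne'
  have hJ : (∫ x in (0:ℝ)..1, x ^ (m - 1) * (1 - x) ^ (-α))
      = Real.Gamma m * Real.Gamma (1 - α) / Real.Gamma (1 - m) := by
    rw [eq_div_iff hG1m]
    linarith [hbeta]
  have hτpow : τ * (τ ^ (-α) * τ ^ (m - 1)) = τ ^ (-m) := by
    nth_rewrite 1 [← Real.rpow_one τ]
    rw [← Real.rpow_add hτ, ← Real.rpow_add hτ]
    congr 1
    rw [hm]; ring
  have hGm : Real.Gamma (1 + m) = m * Real.Gamma m := by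
    rw [add_comm, Real.Gamma_add_one hm0.ne']
  rw [caputoDeriv, hstep1, hstep2, hstep3, hJ, hGm]
  field_simp
  linear_combination (p * m * Real.Gamma m * Real.Gamma (1 - α) * Real.Gamma (1 - m) + p - α / 2 * p * (Real.Gamma m * Real.Gamma (1 - α) * Real.Gamma (1 - m))) * hτpow

end WrightAux

/-- If `p > 0` solves the transcendental equation of Roscani–Tarzia, then the
triple `(u₁, u₂, S)` with `S(τ) = p τ^(α/2)` satisfies the fractional Stefan
condition `ᶜD₀₊^α S(τ) = lam₂ ∂u₂/∂x(S(τ), τ) − lam₁ ∂u₁/∂x(S(τ), τ)` for `τ > 0`. -/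
theorem fractional_stefan_condition (α κ₁ κ₂ lam₁ lam₂ c p : ℝ)
    (hα : α ∈ Set.Ioo (0:ℝ) 1) (hκ₁ : 0 < κ₁) (hκ₂ : 0 < κ₂)
    (hlam₁ : 0 < lam₁) (hlam₂ : 0 < lam₂) (hp : 0 < p)
    (hW₁ : wright (-(α / 2)) 1 (-p / Real.sqrt κ₁) ≠ 1)
    (hW₂ : wright (-(α / 2)) 1 (-p / Real.sqrt κ₂) ≠ 0)
    (htrans : p * (Real.Gamma (1 + α / 2) / Real.Gamma (1 - α / 2)) =
        (lam₂ / Real.sqrt κ₂) * c *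
            (wright (-(α / 2)) (1 - α / 2) (-p / Real.sqrt κ₂) /
              wright (-(α / 2)) 1 (-p / Real.sqrt κ₂)) -
          (lam₁ / Real.sqrt κ₁) *
            (wright (-(α / 2)) (1 - α / 2) (-p / Real.sqrt κ₁) /
              (wright (-(α / 2)) 1 (-p / Real.sqrt κ₁) - 1)))
    (S : ℝ → ℝ) (hS : ∀ τ : ℝ, 0 ≤ τ → S τ = p * τ ^ (α / 2)) :
    ∀ τ : ℝ, 0 < τ →
      caputoDeriv α S τ =
        lam₂ * deriv (fun y => solidProfile α κ₂ p c y τ) (S τ) -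
          lam₁ * deriv (fun y => liquidProfile α κ₁ p y τ) (S τ) := by
  intro τ hτ
  obtain ⟨hα0, hα1⟩ := hα
  have hg0 : (0:ℝ) < α / 2 := by linarith
  have hg1 : α / 2 < 1 := by linarith
  have hτm : (0:ℝ) < τ ^ (α / 2) := Real.rpow_pos_of_pos hτ _
  have hs₁ : (0:ℝ) < Real.sqrt κ₁ := Real.sqrt_pos.mpr hκ₁
  have hs₂ : (0:ℝ) < Real.sqrt κ₂ := Real.sqrt_pos.mpr hκ₂
  have hSτ : S τ = p * τ ^ (α / 2) := hS τ hτ.le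
  have hz1 : -(S τ) / (Real.sqrt κ₁ * τ ^ (α / 2)) = -p / Real.sqrt κ₁ := by
    rw [hSτ]; field_simp
  have hz2 : -(S τ) / (Real.sqrt κ₂ * τ ^ (α / 2)) = -p / Real.sqrt κ₂ := by
    rw [hSτ]; field_simp
  have hparam : -(α / 2) + 1 = 1 - α / 2 := by ring
  -- liquid derivative
  have hinner₁ : HasDerivAt (fun y : ℝ => -y / (Real.sqrt κ₁ * τ ^ (α / 2)))
      (-1 / (Real.sqrt κ₁ * τ ^ (α / 2))) (S τ) :=
    (hasDerivAt_id (S τ)).neg.div_const _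
  have hcomp₁ : HasDerivAt
      (fun y : ℝ => wright (-(α / 2)) 1 (-y / (Real.sqrt κ₁ * τ ^ (α / 2))))
      (wright (-(α / 2)) (1 - α / 2) (-p / Real.sqrt κ₁) *
        (-1 / (Real.sqrt κ₁ * τ ^ (α / 2)))) (S τ) := by
    have h := (wright_hasDerivAt (α / 2) 1 hg0 hg1
      (-(S τ) / (Real.sqrt κ₁ * τ ^ (α / 2)))).comp (S τ) hinner₁
    rw [hz1, hparam] at h
    exact h
  have hliq : HasDerivAt (fun y => liquidProfile α κ₁ p y τ)
      (-((wright (-(α / 2)) (1 - α / 2) (-p / Real.sqrt κ₁) *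
          (-1 / (Real.sqrt κ₁ * τ ^ (α / 2)))) /
        (wright (-(α / 2)) 1 (-p / Real.sqrt κ₁) - 1))) (S τ) := by
    have h := ((hcomp₁.sub_const 1).div_const
      (wright (-(α / 2)) 1 (-p / Real.sqrt κ₁) - 1)).const_sub 1
    exact h
  -- solid derivative
  have hinner₂ : HasDerivAt (fun y : ℝ => -y / (Real.sqrt κ₂ * τ ^ (α / 2)))
      (-1 / (Real.sqrt κ₂ * τ ^ (α / 2))) (S τ) :=
    (hasDerivAt_id (S τ)).neg.div_const _
  have hcomp₂ : HasDerivAt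
      (fun y : ℝ => wright (-(α / 2)) 1 (-y / (Real.sqrt κ₂ * τ ^ (α / 2))))
      (wright (-(α / 2)) (1 - α / 2) (-p / Real.sqrt κ₂) *
        (-1 / (Real.sqrt κ₂ * τ ^ (α / 2)))) (S τ) := by
    have h := (wright_hasDerivAt (α / 2) 1 hg0 hg1
      (-(S τ) / (Real.sqrt κ₂ * τ ^ (α / 2)))).comp (S τ) hinner₂
    rw [hz2, hparam] at h
    exact h
  have hsol : HasDerivAt (fun y => solidProfile α κ₂ p c y τ)
      ((c * -(wright (-(α / 2)) (1 - α / 2) (-p / Real.sqrt κ₂) *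
          (-1 / (Real.sqrt κ₂ * τ ^ (α / 2))))) /
        wright (-(α / 2)) 1 (-p / Real.sqrt κ₂)) (S τ) := by
    have h := ((hcomp₂.const_sub (wright (-(α / 2)) 1 (-p / Real.sqrt κ₂))).const_mul
      c).div_const (wright (-(α / 2)) 1 (-p / Real.sqrt κ₂))
    exact h
  rw [hliq.deriv, hsol.deriv, caputo_rpow α p ⟨hα0, hα1⟩ S hS hτ]
  have hD₁ : wright (-(α / 2)) 1 (-p / Real.sqrt κ₁) - 1 ≠ 0 := sub_ne_zero.mpr hW₁
  have hτneg : τ ^ (-(α / 2)) = (τ ^ (α / 2))⁻¹ := by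
    rw [← Real.rpow_neg hτ.le]
  rw [hτneg, htrans]
  set W₁' := wright (-(α / 2)) (1 - α / 2) (-p / Real.sqrt κ₁) with hW1'
  set W₂' := wright (-(α / 2)) (1 - α / 2) (-p / Real.sqrt κ₂) with hW2'
  set A := wright (-(α / 2)) 1 (-p / Real.sqrt κ₂) with hA
  set B := wright (-(α / 2)) 1 (-p / Real.sqrt κ₁) with hB
  set T := τ ^ (α / 2) with hT
  have hT0 : T ≠ 0 := hτm.ne'
  field_simp
end
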